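/- arXiv:2210.09703 — 2 statements merged into one kernel-verified Lean document; each statement's English description precedes it below -/
import Mathlib

section
/- Let D = (Q, C, q_init, δ, F) be a deterministic automaton with a single final state q_fin that is absorbing, in which every state is reachable from q_init, and let W = Safe(L(D)) or W = Reach(L(D)). Then D admits a monotone decomposition with k sets if and only if there exists a chromatic memory structure M with k states such that W is M-strongly-monotone. -/
set_option autoImplicit false

namespace RegularMemory

/-- Concatenation of a finite word with an infinite word. -/
def wcat {C : Type} (w : List C) (x : ℕ → C) : ℕ → C := fun n =>
  if h : n < w.length then w.get ⟨n, h⟩ else x (n - w.length)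

/-- The infinite word `w^ω` (junk value if `w` is empty). -/
noncomputable def wpow {C : Type} [Nonempty C] : List C → ℕ → C
  | [] => fun _ => Classical.arbitrary C
  | (a :: l) => fun n => (a :: l).get ⟨n % (a :: l).length, Nat.mod_lt n (Nat.succ_pos _)⟩

/-- Winning continuations `w⁻¹W` of the finite word `w` for the objective `W`. -/
def contAfter {C : Type} (W : Set (ℕ → C)) (w : List C) : Set (ℕ → C) :=
  {x | wcat w x ∈ W}

/-- Prefix preorder `w₁ ⪯_W w₂`. -/
def prefLe {C : Type} (W : Set (ℕ → C)) (w₁ w₂ : List C) : Prop :=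
  contAfter W w₁ ⊆ contAfter W w₂

/-- Strict prefix relation `w₁ ≺_W w₂`. -/
def prefLt {C : Type} (W : Set (ℕ → C)) (w₁ w₂ : List C) : Prop :=
  prefLe W w₁ w₂ ∧ ¬ prefLe W w₂ w₁

/-- Comparability for the prefix preorder. -/
def PrefComparable {C : Type} (W : Set (ℕ → C)) (w₁ w₂ : List C) : Prop :=
  prefLe W w₁ w₂ ∨ prefLe W w₂ w₁

/-- The general reachability objective derived from `A`: infinite words with a prefix in `A`. -/
def ReachObj {C : Type} (A : Set (List C)) : Set (ℕ → C) :=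
  {x | ∃ n : ℕ, (List.ofFn fun i : Fin n => x i) ∈ A}

/-- The general safety objective derived from `A`. -/
def SafeObj {C : Type} (A : Set (List C)) : Set (ℕ → C) :=
  (ReachObj A)ᶜ

/-- The prefix preorder of `W` has finitely many equivalence classes. -/
def FinClasses {C : Type} (W : Set (ℕ → C)) : Prop :=
  (Set.range fun w : List C => contAfter W w).Finite

/-- The prefix preorder of `W` is well-founded:
every nonempty chain contains a minimal element. -/
def PrefWellFounded {C : Type} (W : Set (ℕ → C)) : Prop :=
  ∀ S : Set (List C), S.Nonempty →
    (∀ w₁ ∈ S, ∀ w₂ ∈ S, PrefComparable W w₁ w₂) →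
    ∃ w₀ ∈ S, ∀ w ∈ S, ¬ prefLt W w w₀

/-- Chromatic memory structure. -/
structure MemStruct (C : Type) where
  M : Type
  init : M
  upd : M → C → M

/-- Extension of the update function to finite words. -/
def MemStruct.updStar {C : Type} (N : MemStruct C) (m : N.M) (w : List C) : N.M :=
  w.foldl N.upd m

/-- The trivial one-state memory structure. -/
def trivMem (C : Type) : MemStruct C :=
  ⟨Unit, (), fun _ _ => ()⟩

/-- `W` is `N`-strongly-monotone. -/
def StronglyMonotone {C : Type} (N : MemStruct C) (W : Set (ℕ → C)) : Prop :=
  ∀ w₁ w₂ : List C,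
    N.updStar N.init w₁ = N.updStar N.init w₂ → PrefComparable W w₁ w₂

/-- `W` is `N`-progress-consistent. -/
def ProgressConsistent {C : Type} [Nonempty C] (N : MemStruct C) (W : Set (ℕ → C)) : Prop :=
  ∀ (m : N.M) (w₁ w₂ : List C),
    N.updStar N.init w₁ = m → N.updStar m w₂ = m →
    prefLt W w₁ (w₁ ++ w₂) → wcat w₁ (wpow w₂) ∈ W

/-- Two-player arena with colored edges; Player-1 vertices have outgoing edges
(so that strategies of Player 1 exist). -/
structure Arena (C : Type) where
  V : Type
  P1 : V → Prop
  E : Set (V × C × V)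
  succ : ∀ v : V, P1 v → ∃ e ∈ E, e.1 = v

namespace Arena

/-- Valid histories starting at a given vertex. -/
def HistFrom {C : Type} (A : Arena C) : A.V → List (A.V × C × A.V) → Prop
  | _, [] => True
  | v, e :: l => e ∈ A.E ∧ e.1 = v ∧ HistFrom A e.2.2 l

/-- Endpoint of a history. -/
def endFrom {C : Type} (A : Arena C) : A.V → List (A.V × C × A.V) → A.V
  | v, [] => v
  | _, e :: l => endFrom A e.2.2 l

/-- Infinite plays from a vertex. -/
def PlayFrom {C : Type} (A : Arena C) (v : A.V) (π : ℕ → A.V × C × A.V) : Prop :=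
  (π 0).1 = v ∧ ∀ n : ℕ, π n ∈ A.E ∧ (π n).2.2 = (π (n + 1)).1

/-- Colors along a play. -/
def playCol {C V : Type} (π : ℕ → V × C × V) : ℕ → C :=
  fun n => (π n).2.1

/-- Strategies of Player 1: on every valid history ending in a Player-1 vertex,
the strategy picks an edge leaving that vertex. -/
structure Strategy {C : Type} (A : Arena C) where
  next : A.V → List (A.V × C × A.V) → A.V × C × A.V
  legal : ∀ (v : A.V) (l : List (A.V × C × A.V)),
    A.HistFrom v l → A.P1 (A.endFrom v l) →
      next v l ∈ A.E ∧ (next v l).1 = A.endFrom v l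

/-- A play from `v` is consistent with the strategy `σ`. -/
def Strategy.Consistent {C : Type} {A : Arena C} (σ : A.Strategy) (v : A.V)
    (π : ℕ → A.V × C × A.V) : Prop :=
  ∀ n : ℕ, A.P1 (A.endFrom v (List.ofFn fun i : Fin n => π i)) →
    π n = σ.next v (List.ofFn fun i : Fin n => π i)

/-- `σ` is winning from `v` for the objective `W`. -/
def Strategy.WinningFrom {C : Type} {A : Arena C} (σ : A.Strategy)
    (W : Set (ℕ → C)) (v : A.V) : Prop :=
  ∀ π : ℕ → A.V × C × A.V, A.PlayFrom v π → σ.Consistent v π → playCol π ∈ W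

/-- `σ` is optimal in `(A, W)`: winning from every vertex from which
Player 1 has some winning strategy. -/
def Strategy.Optimal {C : Type} {A : Arena C} (σ : A.Strategy) (W : Set (ℕ → C)) : Prop :=
  ∀ v : A.V, (∃ σ' : A.Strategy, σ'.WinningFrom W v) → σ.WinningFrom W v

/-- `σ` is based on the memory structure `N`. -/
def Strategy.BasedOn {C : Type} {A : Arena C} (σ : A.Strategy) (N : MemStruct C) : Prop :=
  ∃ nxt : A.V → N.M → A.V × C × A.V,
    ∀ (v : A.V) (l : List (A.V × C × A.V)),
      A.HistFrom v l → A.P1 (A.endFrom v l) →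
        σ.next v l = nxt (A.endFrom v l) (N.updStar N.init (l.map fun e => e.2.1))

/-- Finite arena: finitely many vertices and edges. -/
def IsFinite {C : Type} (A : Arena C) : Prop := Finite A.V ∧ A.E.Finite

/-- Finitely branching arena. -/
def FinBranching {C : Type} (A : Arena C) : Prop :=
  ∀ v : A.V, {e ∈ A.E | e.1 = v}.Finite

/-- One-player arena of Player 1. -/
def OneP1 {C : Type} (A : Arena C) : Prop := ∀ v : A.V, A.P1 v

end Arena

/-- `N` suffices to play optimally for `W` in all arenas of the class `P`. -/
def SufficesIn {C : Type} (N : MemStruct C) (W : Set (ℕ → C))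
    (P : Arena C → Prop) : Prop :=
  ∀ A : Arena C, P A → ∃ σ : A.Strategy, σ.BasedOn N ∧ σ.Optimal W

/-- Deterministic automaton (with complete transition function). -/
structure DetAuto (C : Type) where
  Q : Type
  init : Q
  δ : Q → C → Q
  F : Set Q

/-- Extension of the transition function to finite words. -/
def DetAuto.δStar {C : Type} (D : DetAuto C) (q : D.Q) (w : List C) : D.Q :=
  w.foldl D.δ q

/-- Language recognized by `D`. -/
def DetAuto.lang {C : Type} (D : DetAuto C) : Set (List C) :=
  {w | D.δStar D.init w ∈ D.F}

/-- Prefix preorder extended to automaton states. -/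
def statePrefLe {C : Type} (D : DetAuto C) (W : Set (ℕ → C)) (q₁ q₂ : D.Q) : Prop :=
  ∀ w₁ w₂ : List C,
    D.δStar D.init w₁ = q₁ → D.δStar D.init w₂ = q₂ → prefLe W w₁ w₂

def statePrefLt {C : Type} (D : DetAuto C) (W : Set (ℕ → C)) (q₁ q₂ : D.Q) : Prop :=
  statePrefLe D W q₁ q₂ ∧ ¬ statePrefLe D W q₂ q₁

def StateComparable {C : Type} (D : DetAuto C) (W : Set (ℕ → C)) (q₁ q₂ : D.Q) : Prop :=
  statePrefLe D W q₁ q₂ ∨ statePrefLe D W q₂ q₁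

/-- Monotone decomposition of `D` with `k` sets. -/
def MonotoneDecomposition {C : Type} (D : DetAuto C) (W : Set (ℕ → C))
    {k : ℕ} (Γ : Fin k → Set D.Q) : Prop :=
  (∀ q : D.Q, ∃ i : Fin k, q ∈ Γ i) ∧
  (∀ (c : C) (i : Fin k), ∃ j : Fin k, (fun q => D.δ q c) '' Γ i ⊆ Γ j) ∧
  (∀ i : Fin k, ∀ q₁ ∈ Γ i, ∀ q₂ ∈ Γ i, StateComparable D W q₁ q₂)

end RegularMemory


namespace RegularMemory

lemma absorb_star {C : Type} (D : DetAuto C) (qfin : D.Q)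
    (habs : ∀ c : C, D.δ qfin c = qfin) (u : List C) : D.δStar qfin u = qfin := by
  induction u with
  | nil => rfl
  | cons c u ih =>
    show (c :: u).foldl D.δ qfin = qfin
    rw [List.foldl_cons, habs]; exact ih

lemma δStar_append {C : Type} (D : DetAuto C) (q : D.Q) (u v : List C) :
    D.δStar q (u ++ v) = D.δStar (D.δStar q u) v := by
  simp [DetAuto.δStar, List.foldl_append]

lemma updStar_append {C : Type} (N : MemStruct C) (m : N.M) (u v : List C) :
    N.updStar m (u ++ v) = N.updStar (N.updStar m u) v := by
  simp [MemStruct.updStar, List.foldl_append]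

lemma ofFn_wcat {C : Type} (w : List C) (x : ℕ → C) (n : ℕ) :
    (List.ofFn fun i : Fin n => wcat w x i) =
      w.take n ++ List.ofFn (fun i : Fin (n - w.length) => x i) := by
  apply List.ext_getElem
  · simp; omega
  · intro i h1 h2
    simp only [List.length_ofFn, List.length_append, List.length_take] at h1 h2
    rw [List.getElem_ofFn]
    by_cases hc : i < w.length
    · rw [List.getElem_append_left (by simp; omega)]
      simp [wcat, hc]
    · rw [List.getElem_append_right (by simp; omega)]
      simp only [List.getElem_ofFn]
      simp only [wcat, hc, dif_neg]
      have hmin : (w.take n).length = w.length := by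
        simp only [List.length_take]; omega
      rw [hmin]
      simp

lemma contAfter_reach {C : Type} (D : DetAuto C) (qfin : D.Q)
    (hF : D.F = {qfin}) (habs : ∀ c : C, D.δ qfin c = qfin)
    (w : List C) (x : ℕ → C) :
    x ∈ contAfter (ReachObj D.lang) w ↔
      ∃ m : ℕ, D.δStar (D.δStar D.init w) (List.ofFn fun i : Fin m => x i) = qfin := by
  constructor
  · rintro ⟨n, hn⟩
    rw [ofFn_wcat] at hn
    have hδ : D.δStar D.init
        (w.take n ++ List.ofFn fun i : Fin (n - w.length) => x i) = qfin := by
      have h' : _ ∈ D.F := hn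
      rw [hF] at h'; exact h'
    rw [δStar_append] at hδ
    by_cases hc : w.length ≤ n
    · refine ⟨n - w.length, ?_⟩
      rwa [List.take_of_length_le hc] at hδ
    · have h0 : n - w.length = 0 := by omega
      rw [h0] at hδ
      simp only [List.ofFn_zero] at hδ
      have hδ' : D.δStar D.init (w.take n) = qfin := hδ
      refine ⟨0, ?_⟩
      show D.δStar D.init w = qfin
      conv_lhs => rw [← List.take_append_drop n w]
      rw [δStar_append, hδ', absorb_star D qfin habs]
  · rintro ⟨m, hm⟩
    refine ⟨w.length + m, ?_⟩
    show _ ∈ D.lang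
    have hF' : D.lang = {u | D.δStar D.init u = qfin} := by
      unfold DetAuto.lang; rw [hF]; rfl
    rw [hF']
    show D.δStar D.init _ = qfin
    rw [ofFn_wcat]
    have h1 : w.length + m - w.length = m := by omega
    rw [h1, List.take_of_length_le (by omega), δStar_append]
    exact hm

lemma contAfter_eq_of_state {C : Type} (D : DetAuto C) (qfin : D.Q)
    (hF : D.F = {qfin}) (habs : ∀ c : C, D.δ qfin c = qfin)
    (W : Set (ℕ → C)) (hW : W = SafeObj D.lang ∨ W = ReachObj D.lang)
    (w₁ w₂ : List C) (h : D.δStar D.init w₁ = D.δStar D.init w₂) :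
    contAfter W w₁ = contAfter W w₂ := by
  have key : contAfter (ReachObj D.lang) w₁ = contAfter (ReachObj D.lang) w₂ := by
    ext x
    rw [contAfter_reach D qfin hF habs, contAfter_reach D qfin hF habs, h]
  rcases hW with h' | h' <;> subst h'
  · ext x
    have hx := Set.ext_iff.mp key x
    show wcat w₁ x ∈ (ReachObj D.lang)ᶜ ↔ wcat w₂ x ∈ (ReachObj D.lang)ᶜ
    simp only [Set.mem_compl_iff]
    exact not_congr hx
  · exact key

/-- an automaton `D` (single absorbing final state, all states
reachable) admits a monotone decomposition with `k` sets iff there is a memory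
structure with `k` states making the derived reachability or safety objective
strongly monotone. -/
theorem monotoneDecomposition_iff_stronglyMonotone {C : Type} [Nonempty C]
    (D : DetAuto C) (qfin : D.Q)
    (hF : D.F = {qfin})
    (habs : ∀ c : C, D.δ qfin c = qfin)
    (hreach : ∀ q : D.Q, ∃ w : List C, D.δStar D.init w = q)
    (W : Set (ℕ → C))
    (hW : W = SafeObj D.lang ∨ W = ReachObj D.lang)
    (k : ℕ) :
    (∃ Γ : Fin k → Set D.Q, MonotoneDecomposition D W Γ) ↔
      ∃ N : MemStruct C, Nonempty (N.M ≃ Fin k) ∧ StronglyMonotone N W := by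
  constructor
  · rintro ⟨Γ, hcov, hmov, hchain⟩
    choose f hf using hcov
    choose g hg using hmov
    refine ⟨⟨Fin k, f D.init, fun i c => g c i⟩, ⟨Equiv.refl _⟩, ?_⟩
    have inv : ∀ (w : List C) (q : D.Q) (i : Fin k), q ∈ Γ i →
        D.δStar q w ∈ Γ (w.foldl (fun i c => g c i) i) := by
      intro w
      induction w with
      | nil => intro q i h; exact h
      | cons c w ih =>
        intro q i h
        have hq : D.δ q c ∈ Γ (g c i) := hg c i ⟨q, h, rfl⟩
        exact ih _ _ hq
    intro w₁ w₂ hup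
    have h1 := inv w₁ D.init (f D.init) (hf D.init)
    have h2 := inv w₂ D.init (f D.init) (hf D.init)
    have hup' : w₁.foldl (fun i c => g c i) (f D.init)
        = w₂.foldl (fun i c => g c i) (f D.init) := hup
    rw [hup'] at h1
    rcases hchain _ _ h1 _ h2 with h | h
    · exact Or.inl (h w₁ w₂ rfl rfl)
    · exact Or.inr (h w₂ w₁ rfl rfl)
  · rintro ⟨N, ⟨e⟩, hSM⟩
    refine ⟨fun i => {q | ∃ w, D.δStar D.init w = q ∧ N.updStar N.init w = e.symm i},
      ?_, ?_, ?_⟩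
    · intro q
      obtain ⟨w, hw⟩ := hreach q
      exact ⟨e (N.updStar N.init w), w, hw, (e.symm_apply_apply _).symm⟩
    · intro c i
      refine ⟨e (N.upd (e.symm i) c), ?_⟩
      rintro q ⟨q', ⟨w, hw1, hw2⟩, rfl⟩
      refine ⟨w ++ [c], ?_, ?_⟩
      · rw [δStar_append, hw1]; rfl
      · rw [updStar_append, hw2, e.symm_apply_apply]; rfl
    · rintro i q₁ ⟨w₁, hq₁, hm₁⟩ q₂ ⟨w₂, hq₂, hm₂⟩
      have hcomp := hSM w₁ w₂ (hm₁.trans hm₂.symm)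
      have main : ∀ (wa wb : List C), prefLe W wa wb →
          ∀ w₁' w₂' : List C,
            D.δStar D.init w₁' = D.δStar D.init wa →
            D.δStar D.init w₂' = D.δStar D.init wb → prefLe W w₁' w₂' := by
        intro wa wb hle w₁' w₂' h1 h2
        have e1 := contAfter_eq_of_state D qfin hF habs W hW w₁' wa h1
        have e2 := contAfter_eq_of_state D qfin hF habs W hW w₂' wb h2
        unfold prefLe at *
        rw [e1, e2]; exact hle
      rcases hcomp with h | h
      · exact Or.inl (fun w₁' w₂' h1 h2 =>
          main w₁ w₂ h w₁' w₂' (h1.trans hq₁.symm) (h2.trans hq₂.symm))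
      · exact Or.inr (fun w₂' w₁' h2 h1 =>
          main w₂ w₁ h w₂' w₁' (h2.trans hq₂.symm) (h1.trans hq₁.symm))

end RegularMemory
end

section
/- Let G = (V, E) be a finite directed graph with n = |V| vertices and m = |E| edges, where m ≥ n ≥ 1, and let D_G be the automaton constructed from G. Then G has a Hamiltonian cycle if and only if D_G admits a monotone decomposition with n + m + 1 sets. -/
set_option autoImplicit false

namespace RegularMemory

/-- Vertex and edge states coming from the cycle graph `C_n` (`vc`, `ec`)
and from the graph `G` (`vg`, `eg`). -/
inductive ZKind (n : ℕ) (Ed : Finset (Fin n × Fin n)) : Type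
  | vc (i : Fin n)
  | ec (i : Fin n)
  | vg (v : Fin n)
  | eg (e : Fin n × Fin n) (he : e ∈ Ed)

/-- States of the automaton `D_G`. -/
inductive DGState (n : ℕ) (Ed : Finset (Fin n × Fin n)) : Type
  | base (z : ZKind n Ed)
  | qinit
  | bot
  | top

/-- Alphabet of the automaton `D_G`: letters `in`, `out`, and one letter `a_z`
for each vertex/edge state `z`. -/
inductive DGAlpha (n : ℕ) (Ed : Finset (Fin n × Fin n)) : Type
  | inL
  | outL
  | az (z : ZKind n Ed)

instance (n : ℕ) (Ed : Finset (Fin n × Fin n)) : Nonempty (DGAlpha n Ed) :=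
  ⟨DGAlpha.inL⟩

/-- Cyclic successor in `Fin n`. -/
def finSucc {n : ℕ} (i : Fin n) : Fin n :=
  ⟨(i.val + 1) % n, Nat.mod_lt _ i.pos⟩

/-- Target of the transition reading letter `a_{z'}` from the state `z`. -/
def azTarget {n : ℕ} {Ed : Finset (Fin n × Fin n)} (z z' : ZKind n Ed) : DGState n Ed :=
  match z, z' with
  | .vc i, .vc j => if i = j then .top else .bot
  | .ec i, .ec j => if i = j then .top else .bot
  | .vg v, .vg w => if v = w then .top else .bot
  | .vg _, .vc _ => .top
  | .eg e _, .eg e' _ => if e = e' then .top else .bot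
  | .eg _ _, .ec _ => .top
  | _, _ => .bot

/-- Transition function of the automaton `D_G`. -/
def DGdelta {n : ℕ} {Ed : Finset (Fin n × Fin n)} :
    DGState n Ed → DGAlpha n Ed → DGState n Ed
  | .base (.vc i), .inL => .base (.vc i)
  | .base (.vc i), .outL => .base (.vc i)
  | .base (.ec i), .inL => .base (.vc i)
  | .base (.ec i), .outL => .base (.vc (finSucc i))
  | .base (.vg v), .inL => .base (.vg v)
  | .base (.vg v), .outL => .base (.vg v)
  | .base (.eg e _), .inL => .base (.vg e.1)
  | .base (.eg e _), .outL => .base (.vg e.2)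
  | .base z, .az z' => azTarget z z'
  | .qinit, .inL => .qinit
  | .qinit, .outL => .qinit
  | .qinit, .az z => .base z
  | .bot, _ => .bot
  | .top, _ => .top

/-- The automaton `D_G` built from the graph `G = (Fin n, Ed)`. -/
def DG (n : ℕ) (Ed : Finset (Fin n × Fin n)) : DetAuto (DGAlpha n Ed) where
  Q := DGState n Ed
  init := DGState.qinit
  δ := DGdelta
  F := {DGState.top}

/-- `G = (Fin n, Ed)` has a Hamiltonian cycle. -/
def HasHamiltonianCycle (n : ℕ) (Ed : Finset (Fin n × Fin n)) : Prop :=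
  ∃ u : Fin n → Fin n, Function.Bijective u ∧ ∀ i : Fin n, (u i, u (finSucc i)) ∈ Ed

end RegularMemory

namespace RegularMemory

section HCproof

variable {n : ℕ} {Ed : Finset (Fin n × Fin n)}

@[simp] lemma dstar_nil (q : DGState n Ed) : (DG n Ed).δStar q [] = q := rfl
@[simp] lemma dstar_cons (q : DGState n Ed) (c : DGAlpha n Ed) (w : List (DGAlpha n Ed)) :
    (DG n Ed).δStar q (c :: w) = (DG n Ed).δStar ((DG n Ed).δ q c) w := rfl
@[simp] lemma dgq_eq_iff (a b : DGState n Ed) : (@Eq (DG n Ed).Q a b) = (a = b) := rfl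
@[simp] lemma dgq_ne_iff (a b : DGState n Ed) : (@Ne (DG n Ed).Q a b) = (a ≠ b) := rfl

@[simp] lemma DG_delta (q : DGState n Ed) (c : DGAlpha n Ed) :
    (DG n Ed).δ q c = DGdelta q c := rfl

@[simp] lemma dg_delta_top (c : DGAlpha n Ed) : DGdelta (DGState.top : DGState n Ed) c = .top := by
  cases c <;> rfl

@[simp] lemma dg_delta_bot (c : DGAlpha n Ed) : DGdelta (DGState.bot : DGState n Ed) c = .bot := by
  cases c <;> rfl

@[simp] lemma dg_base_az (z z' : ZKind n Ed) :
    DGdelta (DGState.base z) (DGAlpha.az z') = azTarget z z' := by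
  cases z <;> rfl

lemma dgstar_top (w : List (DGAlpha n Ed)) : (DG n Ed).δStar DGState.top w = DGState.top := by
  induction w with
  | nil => rfl
  | cons c w ih => simpa using ih

lemma dgstar_bot (w : List (DGAlpha n Ed)) : (DG n Ed).δStar DGState.bot w = DGState.bot := by
  induction w with
  | nil => rfl
  | cons c w ih => simpa using ih

lemma wcat_nil {C : Type} (x : ℕ → C) : wcat [] x = x := by
  funext k; simp [wcat]

@[simp] lemma wcat_cons_zero {C : Type} (a : C) (w : List C) (x : ℕ → C) :
    wcat (a :: w) x 0 = a := by simp [wcat]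

@[simp] lemma wcat_cons_succ {C : Type} (a : C) (w : List C) (x : ℕ → C) (k : ℕ) :
    wcat (a :: w) x (k + 1) = wcat w x k := by
  by_cases h : k < w.length <;>
    simp [wcat, h, Nat.succ_lt_succ_iff, Nat.succ_sub_succ]

/-- Player eventually reaches `⊤` from `q` reading `x`. -/
def Wins (q : DGState n Ed) (x : ℕ → DGAlpha n Ed) : Prop :=
  ∃ k : ℕ, (DG n Ed).δStar q (List.ofFn fun i : Fin k => x i) = DGState.top

lemma wins_iff_cons (q : DGState n Ed) (x : ℕ → DGAlpha n Ed) :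
    Wins q x ↔ Wins (DGdelta q (x 0)) (fun k => x (k + 1)) := by
  constructor
  · rintro ⟨k, hk⟩
    cases k with
    | zero =>
      simp only [List.ofFn_zero, dstar_nil] at hk
      subst hk
      exact ⟨0, by simp⟩
    | succ k =>
      rw [List.ofFn_succ] at hk
      exact ⟨k, by simpa using hk⟩
  · rintro ⟨k, hk⟩
    exact ⟨k + 1, by rw [List.ofFn_succ]; simpa using hk⟩

lemma wins_wcat (w : List (DGAlpha n Ed)) (x : ℕ → DGAlpha n Ed) (q : DGState n Ed) :
    Wins q (wcat w x) ↔ Wins ((DG n Ed).δStar q w) x := by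
  induction w generalizing q with
  | nil => rw [wcat_nil]; rfl
  | cons a w ih =>
    rw [wins_iff_cons]
    have h2 : (fun k => wcat (a :: w) x (k + 1)) = wcat w x := funext fun k => wcat_cons_succ a w x k
    rw [wcat_cons_zero, h2, ih, dstar_cons, DG_delta]

lemma mem_contAfter (w : List (DGAlpha n Ed)) (x : ℕ → DGAlpha n Ed) :
    x ∈ contAfter (ReachObj (DG n Ed).lang) w ↔ Wins ((DG n Ed).δStar (DG n Ed).init w) x := by
  refine Iff.trans ?_ (wins_wcat w x DGState.qinit)
  show wcat w x ∈ ReachObj (DG n Ed).lang ↔ _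
  unfold ReachObj DetAuto.lang Wins
  simp only [Set.mem_setOf_eq]
  rfl

lemma le_of_sim (q₁ q₂ : DGState n Ed)
    (h : ∀ y : List (DGAlpha n Ed),
      (DG n Ed).δStar q₁ y = DGState.top → (DG n Ed).δStar q₂ y = DGState.top) :
    statePrefLe (DG n Ed) (ReachObj (DG n Ed).lang) q₁ q₂ := by
  intro w₁ w₂ h₁ h₂ x hx
  rw [mem_contAfter, h₁] at hx
  rw [mem_contAfter, h₂]
  obtain ⟨k, hk⟩ := hx
  exact ⟨k, h _ hk⟩

lemma delta_in_ne_top (s : DGState n Ed) (hs : s ≠ DGState.top) :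
    DGdelta s DGAlpha.inL ≠ DGState.top := by
  cases s with
  | base z => cases z <;> simp [DGdelta]
  | qinit => simp [DGdelta]
  | bot => simp
  | top => exact absurd rfl hs

lemma replicate_in_ne_top (k : ℕ) (s : DGState n Ed) (hs : s ≠ DGState.top) :
    (DG n Ed).δStar s (List.replicate k DGAlpha.inL) ≠ DGState.top := by
  induction k generalizing s with
  | zero => simpa using hs
  | succ k ih =>
    rw [List.replicate_succ, dstar_cons, DG_delta]
    exact ih _ (delta_in_ne_top s hs)

lemma not_le (q₁ q₂ : DGState n Ed) (w₁ w₂ y : List (DGAlpha n Ed))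
    (h₁ : (DG n Ed).δStar (DG n Ed).init w₁ = q₁)
    (h₂ : (DG n Ed).δStar (DG n Ed).init w₂ = q₂)
    (hy1 : (DG n Ed).δStar q₁ y = DGState.top)
    (hy2 : (DG n Ed).δStar q₂ y ≠ DGState.top) :
    ¬ statePrefLe (DG n Ed) (ReachObj (DG n Ed).lang) q₁ q₂ := by
  intro hle
  have hp := hle w₁ w₂ h₁ h₂
  have hx1 : wcat y (fun _ => DGAlpha.inL) ∈ contAfter (ReachObj (DG n Ed).lang) w₁ := by
    rw [mem_contAfter, h₁, wins_wcat, hy1]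
    exact ⟨0, by simp [dgstar_top]⟩
  have hx2 := hp hx1
  rw [mem_contAfter, h₂, wins_wcat] at hx2
  obtain ⟨k, hk⟩ := hx2
  rw [List.ofFn_const] at hk
  exact replicate_in_ne_top k _ hy2 hk

lemma reach_base (z : ZKind n Ed) :
    (DG n Ed).δStar (DG n Ed).init [DGAlpha.az z] = DGState.base z := rfl

lemma reach_qinit : (DG n Ed).δStar (DG n Ed).init [] = DGState.qinit := rfl

end HCproof

section HCproof2

variable {n : ℕ} {Ed : Finset (Fin n × Fin n)}

@[simp] lemma dg_vc_in (i : Fin n) :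
    DGdelta (DGState.base (ZKind.vc i) : DGState n Ed) .inL = .base (.vc i) := rfl
@[simp] lemma dg_vc_out (i : Fin n) :
    DGdelta (DGState.base (ZKind.vc i) : DGState n Ed) .outL = .base (.vc i) := rfl
@[simp] lemma dg_ec_in (i : Fin n) :
    DGdelta (DGState.base (ZKind.ec i) : DGState n Ed) .inL = .base (.vc i) := rfl
@[simp] lemma dg_ec_out (i : Fin n) :
    DGdelta (DGState.base (ZKind.ec i) : DGState n Ed) .outL = .base (.vc (finSucc i)) := rfl
@[simp] lemma dg_vg_in (v : Fin n) :
    DGdelta (DGState.base (ZKind.vg v) : DGState n Ed) .inL = .base (.vg v) := rfl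
@[simp] lemma dg_vg_out (v : Fin n) :
    DGdelta (DGState.base (ZKind.vg v) : DGState n Ed) .outL = .base (.vg v) := rfl
@[simp] lemma dg_eg_in (e : Fin n × Fin n) (he : e ∈ Ed) :
    DGdelta (DGState.base (ZKind.eg e he)) .inL = .base (.vg e.1) := rfl
@[simp] lemma dg_eg_out (e : Fin n × Fin n) (he : e ∈ Ed) :
    DGdelta (DGState.base (ZKind.eg e he)) .outL = .base (.vg e.2) := rfl
@[simp] lemma dg_qinit_in : DGdelta (DGState.qinit : DGState n Ed) .inL = .qinit := rfl
@[simp] lemma dg_qinit_out : DGdelta (DGState.qinit : DGState n Ed) .outL = .qinit := rfl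
@[simp] lemma dg_qinit_az (z : ZKind n Ed) :
    DGdelta (DGState.qinit : DGState n Ed) (.az z) = .base z := rfl

lemma azTarget_cases (z z' : ZKind n Ed) : azTarget z z' = .bot ∨ azTarget z z' = .top := by
  cases z <;> cases z' <;> simp [azTarget] <;> exact (em _).symm

@[simp] lemma az_self (z : ZKind n Ed) : azTarget z z = .top := by
  cases z <;> simp [azTarget]

lemma az_vc_to_vg (a v : Fin n) (z : ZKind n Ed)
    (h : azTarget (ZKind.vc a) z = DGState.top) : azTarget (ZKind.vg v) z = DGState.top := by
  cases z with
  | vc j => simp [azTarget]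
  | ec j => exact absurd h (by simp [azTarget])
  | vg w => exact absurd h (by simp [azTarget])
  | eg e he => exact absurd h (by simp [azTarget])

lemma az_ec_to_eg (j : Fin n) (e : Fin n × Fin n) (he : e ∈ Ed) (z : ZKind n Ed)
    (h : azTarget (ZKind.ec j) z = DGState.top) : azTarget (ZKind.eg e he) z = DGState.top := by
  cases z with
  | vc i => exact absurd h (by simp [azTarget])
  | ec i => simp [azTarget]
  | vg w => exact absurd h (by simp [azTarget])
  | eg e' he' => exact absurd h (by simp [azTarget])

lemma sim_vc_vg (a v : Fin n) (y : List (DGAlpha n Ed)) :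
    (DG n Ed).δStar (.base (.vc a)) y = DGState.top →
      (DG n Ed).δStar (.base (.vg v)) y = DGState.top := by
  induction y with
  | nil => intro h; simp at h
  | cons c y ih =>
    cases c with
    | inL => simp only [dstar_cons, DG_delta, dg_vc_in, dg_vg_in]; exact ih
    | outL => simp only [dstar_cons, DG_delta, dg_vc_out, dg_vg_out]; exact ih
    | az z =>
      simp only [dstar_cons, DG_delta, dg_base_az]
      intro h
      rcases azTarget_cases (ZKind.vc a) z with hb | ht
      · rw [hb, dgstar_bot] at h; exact absurd h (by simp)
      · rw [az_vc_to_vg a v z ht]; exact dgstar_top y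

lemma sim_ec_eg (j : Fin n) (e : Fin n × Fin n) (he : e ∈ Ed) (y : List (DGAlpha n Ed)) :
    (DG n Ed).δStar (.base (.ec j)) y = DGState.top →
      (DG n Ed).δStar (.base (.eg e he)) y = DGState.top := by
  induction y with
  | nil => intro h; simp at h
  | cons c y ih =>
    cases c with
    | inL =>
      simp only [dstar_cons, DG_delta, dg_ec_in, dg_eg_in]
      exact sim_vc_vg j e.1 y
    | outL =>
      simp only [dstar_cons, DG_delta, dg_ec_out, dg_eg_out]
      exact sim_vc_vg (finSucc j) e.2 y
    | az z =>
      simp only [dstar_cons, DG_delta, dg_base_az]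
      intro h
      rcases azTarget_cases (ZKind.ec j) z with hb | ht
      · rw [hb, dgstar_bot] at h; exact absurd h (by simp)
      · rw [az_ec_to_eg j e he z ht]; exact dgstar_top y

lemma le_bot (q : DGState n Ed) :
    statePrefLe (DG n Ed) (ReachObj (DG n Ed).lang) DGState.bot q :=
  le_of_sim _ _ fun y h => absurd h (by rw [dgstar_bot]; simp)

lemma le_top (q : DGState n Ed) :
    statePrefLe (DG n Ed) (ReachObj (DG n Ed).lang) q DGState.top :=
  le_of_sim _ _ fun y _ => dgstar_top y

lemma sc_refl (q : DGState n Ed) :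
    StateComparable (DG n Ed) (ReachObj (DG n Ed).lang) q q :=
  Or.inl (le_of_sim _ _ fun _ h => h)

lemma le_vc_vg (a v : Fin n) :
    statePrefLe (DG n Ed) (ReachObj (DG n Ed).lang) (.base (.vc a)) (.base (.vg v)) :=
  le_of_sim _ _ (sim_vc_vg a v)

lemma le_ec_eg (j : Fin n) (e : Fin n × Fin n) (he : e ∈ Ed) :
    statePrefLe (DG n Ed) (ReachObj (DG n Ed).lang) (.base (.ec j)) (.base (.eg e he)) :=
  le_of_sim _ _ (sim_ec_eg j e he)

lemma incomp_bb (z₁ z₂ : ZKind n Ed) (y₁ y₂ : List (DGAlpha n Ed))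
    (h11 : (DG n Ed).δStar (.base z₁) y₁ = DGState.top)
    (h12 : (DG n Ed).δStar (.base z₂) y₁ ≠ DGState.top)
    (h21 : (DG n Ed).δStar (.base z₂) y₂ = DGState.top)
    (h22 : (DG n Ed).δStar (.base z₁) y₂ ≠ DGState.top) :
    ¬ StateComparable (DG n Ed) (ReachObj (DG n Ed).lang) (.base z₁) (.base z₂) := by
  rintro (h | h)
  · exact not_le _ _ _ _ y₁ (reach_base z₁) (reach_base z₂) h11 h12 h
  · exact not_le _ _ _ _ y₂ (reach_base z₂) (reach_base z₁) h21 h22 h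

lemma incomp_bq (z : ZKind n Ed) (y₁ y₂ : List (DGAlpha n Ed))
    (h11 : (DG n Ed).δStar (.base z) y₁ = DGState.top)
    (h12 : (DG n Ed).δStar .qinit y₁ ≠ DGState.top)
    (h21 : (DG n Ed).δStar .qinit y₂ = DGState.top)
    (h22 : (DG n Ed).δStar (.base z) y₂ ≠ DGState.top) :
    ¬ StateComparable (DG n Ed) (ReachObj (DG n Ed).lang) (.base z) DGState.qinit := by
  rintro (h | h)
  · exact not_le _ _ _ _ y₁ (reach_base z) reach_qinit h11 h12 h
  · exact not_le _ _ _ _ y₂ reach_qinit (reach_base z) h21 h22 h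

end HCproof2

section HCproof3

variable {n : ℕ} {Ed : Finset (Fin n × Fin n)}

lemma incomp_vc_vc {a b : Fin n} (hab : a ≠ b) :
    ¬ StateComparable (DG n Ed) (ReachObj (DG n Ed).lang)
      (.base (.vc a)) (.base (.vc b)) :=
  incomp_bb _ _ [.az (.vc a)] [.az (.vc b)]
    (by simp [azTarget]) (by simp [azTarget, hab.symm])
    (by simp [azTarget]) (by simp [azTarget, hab])

lemma incomp_vg_vg {v w : Fin n} (hvw : v ≠ w) :
    ¬ StateComparable (DG n Ed) (ReachObj (DG n Ed).lang)
      (.base (.vg v)) (.base (.vg w)) :=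
  incomp_bb _ _ [.az (.vg v)] [.az (.vg w)]
    (by simp [azTarget]) (by simp [azTarget, hvw.symm])
    (by simp [azTarget]) (by simp [azTarget, hvw])

lemma incomp_eg_eg {e e' : Fin n × Fin n} (he : e ∈ Ed) (he' : e' ∈ Ed) (hee : e ≠ e') :
    ¬ StateComparable (DG n Ed) (ReachObj (DG n Ed).lang)
      (.base (.eg e he)) (.base (.eg e' he')) :=
  incomp_bb _ _ [.az (.eg e he)] [.az (.eg e' he')]
    (by simp [azTarget]) (by simp [azTarget, hee.symm])
    (by simp [azTarget]) (by simp [azTarget, hee])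

lemma incomp_vc_ec (a j : Fin n) :
    ¬ StateComparable (DG n Ed) (ReachObj (DG n Ed).lang)
      (.base (.vc a)) (.base (.ec j)) :=
  incomp_bb _ _ [.az (.vc a)] [.az (.ec j)]
    (by simp [azTarget]) (by simp [azTarget])
    (by simp [azTarget]) (by simp [azTarget])

lemma incomp_vc_eg (a : Fin n) {e : Fin n × Fin n} (he : e ∈ Ed) :
    ¬ StateComparable (DG n Ed) (ReachObj (DG n Ed).lang)
      (.base (.vc a)) (.base (.eg e he)) :=
  incomp_bb _ _ [.az (.vc a)] [.az (.eg e he)]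
    (by simp [azTarget]) (by simp [azTarget])
    (by simp [azTarget]) (by simp [azTarget])

lemma incomp_vg_eg (v : Fin n) {e : Fin n × Fin n} (he : e ∈ Ed) :
    ¬ StateComparable (DG n Ed) (ReachObj (DG n Ed).lang)
      (.base (.vg v)) (.base (.eg e he)) :=
  incomp_bb _ _ [.az (.vg v)] [.az (.eg e he)]
    (by simp [azTarget]) (by simp [azTarget])
    (by simp [azTarget]) (by simp [azTarget])

lemma incomp_vc_qinit (a : Fin n) :
    ¬ StateComparable (DG n Ed) (ReachObj (DG n Ed).lang)
      (.base (.vc a)) DGState.qinit :=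
  incomp_bq _ [.az (.vc a)] [.az (.ec a), .az (.ec a)]
    (by simp [azTarget]) (by simp)
    (by simp [azTarget]) (by simp [azTarget])

lemma incomp_vg_qinit (v : Fin n) :
    ¬ StateComparable (DG n Ed) (ReachObj (DG n Ed).lang)
      (.base (.vg v)) DGState.qinit :=
  incomp_bq _ [.az (.vg v)] [.az (.ec v), .az (.ec v)]
    (by simp [azTarget]) (by simp)
    (by simp [azTarget]) (by simp [azTarget])

lemma incomp_ec_qinit (j : Fin n) :
    ¬ StateComparable (DG n Ed) (ReachObj (DG n Ed).lang)
      (.base (.ec j)) DGState.qinit :=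
  incomp_bq _ [.az (.ec j)] [.az (.vc j), .az (.vc j)]
    (by simp [azTarget]) (by simp)
    (by simp [azTarget]) (by simp [azTarget])

lemma incomp_eg_qinit {e : Fin n × Fin n} (he : e ∈ Ed) :
    ¬ StateComparable (DG n Ed) (ReachObj (DG n Ed).lang)
      (.base (.eg e he)) DGState.qinit :=
  incomp_bq _ [.az (.eg e he)] [.az (.vc e.1), .az (.vc e.1)]
    (by simp [azTarget]) (by simp)
    (by simp [azTarget]) (by simp [azTarget])

end HCproof3

section HCproof4

variable {n : ℕ} {Ed : Finset (Fin n × Fin n)}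

/-- Index equivalence for the `n + m + 1` chains. -/
def hamEquiv (n m : ℕ) : (Fin n ⊕ Fin m) ⊕ Fin 1 ≃ Fin (n + m + 1) :=
  (Equiv.sumCongr finSumFinEquiv (Equiv.refl (Fin 1))).trans finSumFinEquiv

def chainV (u : Fin n → Fin n) (a : Fin n) : Set (DGState n Ed) :=
  {q | q = .bot ∨ q = .top ∨ q = .base (.vc a) ∨ q = .base (.vg (u a))}

def chainE (u : Fin n → Fin n) (e : {e : Fin n × Fin n // e ∈ Ed}) : Set (DGState n Ed) :=
  {q | q = .bot ∨ q = .top ∨ q = .base (.eg e.1 e.2) ∨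
       ∃ j, q = .base (.ec j) ∧ (u j, u (finSucc j)) = e.1}

def chainQ : Set (DGState n Ed) := {q | q = .bot ∨ q = .top ∨ q = .qinit}

def fwdChain (u : Fin n → Fin n) : (Fin n ⊕ Fin Ed.card) ⊕ Fin 1 → Set (DGState n Ed)
  | .inl (.inl a) => chainV u a
  | .inl (.inr b) => chainE u (Ed.equivFin.symm b)
  | .inr _ => chainQ

lemma forward_dir (u : Fin n → Fin n) (hu : Function.Bijective u)
    (hedge : ∀ i : Fin n, (u i, u (finSucc i)) ∈ Ed) :
    ∃ Γ : Fin (n + Ed.card + 1) → Set (DG n Ed).Q,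
      MonotoneDecomposition (DG n Ed) (ReachObj (DG n Ed).lang) Γ := by
  set eqv := hamEquiv n Ed.card with heqv
  show ∃ Γ : Fin (n + Ed.card + 1) → Set (DGState n Ed),
    (∀ q : DGState n Ed, ∃ i, q ∈ Γ i) ∧
    (∀ (c : DGAlpha n Ed) (i : Fin (n + Ed.card + 1)),
      ∃ j, (fun q => DGdelta q c) '' Γ i ⊆ Γ j) ∧
    (∀ i, ∀ q₁ ∈ Γ i, ∀ q₂ ∈ Γ i,
      StateComparable (DG n Ed) (ReachObj (DG n Ed).lang) q₁ q₂)
  refine ⟨fun i => fwdChain (Ed := Ed) u (eqv.symm i), ?_, ?_, ?_⟩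
  · -- cover
    intro q
    cases q with
    | base z =>
      cases z with
      | vc a =>
        exact ⟨eqv (.inl (.inl a)),
          by simp only [Equiv.symm_apply_apply]; simp [Set.mem_setOf_eq, fwdChain, chainV]⟩
      | vg v =>
        obtain ⟨a, rfl⟩ := hu.2 v
        exact ⟨eqv (.inl (.inl a)),
          by simp only [Equiv.symm_apply_apply]; simp [Set.mem_setOf_eq, fwdChain, chainV]⟩
      | ec j =>
        refine ⟨eqv (.inl (.inr (Ed.equivFin ⟨_, hedge j⟩))), ?_⟩
        simp only [Equiv.symm_apply_apply, fwdChain]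
        exact Or.inr (Or.inr (Or.inr ⟨j, rfl, rfl⟩))
      | eg e he =>
        refine ⟨eqv (.inl (.inr (Ed.equivFin ⟨e, he⟩))), ?_⟩
        simp only [Equiv.symm_apply_apply, fwdChain]
        exact Or.inr (Or.inr (Or.inl rfl))
    | qinit =>
      exact ⟨eqv (.inr 0), by simp only [Equiv.symm_apply_apply]; simp [Set.mem_setOf_eq, fwdChain, chainQ]⟩
    | bot =>
      exact ⟨eqv (.inr 0), by simp only [Equiv.symm_apply_apply]; simp [Set.mem_setOf_eq, fwdChain, chainQ]⟩
    | top =>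
      exact ⟨eqv (.inr 0), by simp only [Equiv.symm_apply_apply]; simp [Set.mem_setOf_eq, fwdChain, chainQ]⟩
  · -- transitions
    intro c i
    obtain ⟨s, rfl⟩ := eqv.surjective i
    rcases s with (a | b) | o
    · -- chainV a
      cases c with
      | inL =>
        refine ⟨eqv (.inl (.inl a)), ?_⟩
        simp only [Equiv.symm_apply_apply]
        rintro q ⟨p, hp, rfl⟩
        simp only [fwdChain, chainV, Set.mem_setOf_eq] at hp
        rcases hp with rfl | rfl | rfl | rfl <;> simp [Set.mem_setOf_eq, fwdChain, chainV]
      | outL =>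
        refine ⟨eqv (.inl (.inl a)), ?_⟩
        simp only [Equiv.symm_apply_apply]
        rintro q ⟨p, hp, rfl⟩
        simp only [fwdChain, chainV, Set.mem_setOf_eq] at hp
        rcases hp with rfl | rfl | rfl | rfl <;> simp [Set.mem_setOf_eq, fwdChain, chainV]
      | az z =>
        refine ⟨eqv (.inl (.inl a)), ?_⟩
        simp only [Equiv.symm_apply_apply]
        rintro q ⟨p, hp, rfl⟩
        simp only [fwdChain, chainV, Set.mem_setOf_eq] at hp
        rcases hp with rfl | rfl | rfl | rfl
        · simp [Set.mem_setOf_eq, fwdChain, chainV]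
        · simp [Set.mem_setOf_eq, fwdChain, chainV]
        · rcases azTarget_cases (ZKind.vc a) z with h | h <;>
            simp [Set.mem_setOf_eq, fwdChain, chainV, h]
        · rcases azTarget_cases (ZKind.vg (u a)) z with h | h <;>
            simp [Set.mem_setOf_eq, fwdChain, chainV, h]
    · -- chainE
      cases c with
      | inL =>
        by_cases hex : ∃ j, (u j, u (finSucc j)) = (Ed.equivFin.symm b).1
        · obtain ⟨j₀, hj₀⟩ := hex
          refine ⟨eqv (.inl (.inl j₀)), ?_⟩
          simp only [Equiv.symm_apply_apply]
          rintro q ⟨p, hp, rfl⟩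
          simp only [fwdChain, chainE, Set.mem_setOf_eq] at hp
          rcases hp with rfl | rfl | rfl | ⟨j, rfl, hcyc⟩
          · simp [Set.mem_setOf_eq, fwdChain, chainV]
          · simp [Set.mem_setOf_eq, fwdChain, chainV]
          · have h1 : (Ed.equivFin.symm b).1.1 = u j₀ := by rw [← hj₀]
            simp [Set.mem_setOf_eq, fwdChain, chainV, h1]
          · have : j = j₀ := hu.1 (congrArg Prod.fst (hcyc.trans hj₀.symm))
            subst this
            simp [Set.mem_setOf_eq, fwdChain, chainV]
        · obtain ⟨a, ha⟩ := hu.2 (Ed.equivFin.symm b).1.1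
          refine ⟨eqv (.inl (.inl a)), ?_⟩
          simp only [Equiv.symm_apply_apply]
          rintro q ⟨p, hp, rfl⟩
          simp only [fwdChain, chainE, Set.mem_setOf_eq] at hp
          rcases hp with rfl | rfl | rfl | ⟨j, rfl, hcyc⟩
          · simp [Set.mem_setOf_eq, fwdChain, chainV]
          · simp [Set.mem_setOf_eq, fwdChain, chainV]
          · simp [Set.mem_setOf_eq, fwdChain, chainV, ← ha]
          · exact absurd ⟨j, hcyc⟩ hex
      | outL =>
        by_cases hex : ∃ j, (u j, u (finSucc j)) = (Ed.equivFin.symm b).1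
        · obtain ⟨j₀, hj₀⟩ := hex
          refine ⟨eqv (.inl (.inl (finSucc j₀))), ?_⟩
          simp only [Equiv.symm_apply_apply]
          rintro q ⟨p, hp, rfl⟩
          simp only [fwdChain, chainE, Set.mem_setOf_eq] at hp
          rcases hp with rfl | rfl | rfl | ⟨j, rfl, hcyc⟩
          · simp [Set.mem_setOf_eq, fwdChain, chainV]
          · simp [Set.mem_setOf_eq, fwdChain, chainV]
          · have h1 : (Ed.equivFin.symm b).1.2 = u (finSucc j₀) := by rw [← hj₀]
            simp [Set.mem_setOf_eq, fwdChain, chainV, h1]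
          · have : j = j₀ := hu.1 (congrArg Prod.fst (hcyc.trans hj₀.symm))
            subst this
            simp [Set.mem_setOf_eq, fwdChain, chainV]
        · obtain ⟨a, ha⟩ := hu.2 (Ed.equivFin.symm b).1.2
          refine ⟨eqv (.inl (.inl a)), ?_⟩
          simp only [Equiv.symm_apply_apply]
          rintro q ⟨p, hp, rfl⟩
          simp only [fwdChain, chainE, Set.mem_setOf_eq] at hp
          rcases hp with rfl | rfl | rfl | ⟨j, rfl, hcyc⟩
          · simp [Set.mem_setOf_eq, fwdChain, chainV]
          · simp [Set.mem_setOf_eq, fwdChain, chainV]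
          · simp [Set.mem_setOf_eq, fwdChain, chainV, ← ha]
          · exact absurd ⟨j, hcyc⟩ hex
      | az z =>
        refine ⟨eqv (.inl (.inr b)), ?_⟩
        simp only [Equiv.symm_apply_apply]
        rintro q ⟨p, hp, rfl⟩
        simp only [fwdChain, chainE, Set.mem_setOf_eq] at hp
        rcases hp with rfl | rfl | rfl | ⟨j, rfl, hcyc⟩
        · simp [Set.mem_setOf_eq, fwdChain, chainE]
        · simp [Set.mem_setOf_eq, fwdChain, chainE]
        · rcases azTarget_cases
            (ZKind.eg (Ed.equivFin.symm b).1 (Ed.equivFin.symm b).2) z with h | h <;>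
            simp [Set.mem_setOf_eq, fwdChain, chainE, h]
        · rcases azTarget_cases (ZKind.ec j) z with h | h <;>
            simp [Set.mem_setOf_eq, fwdChain, chainE, h]
    · -- chainQ
      cases c with
      | inL =>
        refine ⟨eqv (.inr 0), ?_⟩
        simp only [Equiv.symm_apply_apply]
        rintro q ⟨p, hp, rfl⟩
        simp only [fwdChain, chainQ, Set.mem_setOf_eq] at hp
        rcases hp with rfl | rfl | rfl <;> simp [Set.mem_setOf_eq, fwdChain, chainQ]
      | outL =>
        refine ⟨eqv (.inr 0), ?_⟩
        simp only [Equiv.symm_apply_apply]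
        rintro q ⟨p, hp, rfl⟩
        simp only [fwdChain, chainQ, Set.mem_setOf_eq] at hp
        rcases hp with rfl | rfl | rfl <;> simp [Set.mem_setOf_eq, fwdChain, chainQ]
      | az z =>
        have hmem : ∃ j, DGState.base z ∈ fwdChain (Ed := Ed) u (eqv.symm j) ∧
            DGState.bot ∈ fwdChain (Ed := Ed) u (eqv.symm j) ∧
            DGState.top ∈ fwdChain (Ed := Ed) u (eqv.symm j) := by
          cases z with
          | vc a =>
            refine ⟨eqv (.inl (.inl a)), ?_⟩
            simp only [Equiv.symm_apply_apply]
            refine ⟨?_, ?_, ?_⟩ <;> simp [Set.mem_setOf_eq, fwdChain, chainV]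
          | vg v =>
            obtain ⟨a, rfl⟩ := hu.2 v
            refine ⟨eqv (.inl (.inl a)), ?_⟩
            simp only [Equiv.symm_apply_apply]
            refine ⟨?_, ?_, ?_⟩ <;> simp [Set.mem_setOf_eq, fwdChain, chainV]
          | ec j =>
            refine ⟨eqv (.inl (.inr (Ed.equivFin ⟨_, hedge j⟩))), ?_, ?_, ?_⟩ <;>
              simp only [Equiv.symm_apply_apply, fwdChain]
            · exact Or.inr (Or.inr (Or.inr ⟨j, rfl, rfl⟩))
            · exact Or.inl rfl
            · exact Or.inr (Or.inl rfl)
          | eg e he =>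
            refine ⟨eqv (.inl (.inr (Ed.equivFin ⟨e, he⟩))), ?_, ?_, ?_⟩ <;>
              simp only [Equiv.symm_apply_apply, fwdChain]
            · exact Or.inr (Or.inr (Or.inl rfl))
            · exact Or.inl rfl
            · exact Or.inr (Or.inl rfl)
        obtain ⟨j, hj1, hj2, hj3⟩ := hmem
        refine ⟨j, ?_⟩
        simp only [Equiv.symm_apply_apply]
        rintro q ⟨p, hp, rfl⟩
        simp only [fwdChain, chainQ, Set.mem_setOf_eq] at hp
        rcases hp with rfl | rfl | rfl
        · simpa using hj2
        · simpa using hj3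
        · simpa using hj1
  · -- chains
    intro i
    obtain ⟨s, rfl⟩ := eqv.surjective i
    intro q₁ h₁ q₂ h₂
    simp only [Equiv.symm_apply_apply] at h₁ h₂
    rcases s with (a | b) | o
    · simp only [fwdChain, chainV, Set.mem_setOf_eq] at h₁ h₂
      rcases h₁ with rfl | rfl | rfl | rfl <;> rcases h₂ with rfl | rfl | rfl | rfl <;>
        first
          | exact sc_refl _
          | exact Or.inl (le_bot _)
          | exact Or.inr (le_bot _)
          | exact Or.inl (le_top _)
          | exact Or.inr (le_top _)
          | exact Or.inl (le_vc_vg _ _)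
          | exact Or.inr (le_vc_vg _ _)
    · simp only [fwdChain, chainE, Set.mem_setOf_eq] at h₁ h₂
      rcases h₁ with rfl | rfl | rfl | ⟨j₁, rfl, hc₁⟩ <;>
        rcases h₂ with rfl | rfl | rfl | ⟨j₂, rfl, hc₂⟩ <;>
        first
          | exact sc_refl _
          | exact Or.inl (le_bot _)
          | exact Or.inr (le_bot _)
          | exact Or.inl (le_top _)
          | exact Or.inr (le_top _)
          | exact Or.inl (le_ec_eg _ _ _)
          | exact Or.inr (le_ec_eg _ _ _)
          | (have hj : j₁ = j₂ := hu.1 (congrArg Prod.fst (hc₁.trans hc₂.symm));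
             subst hj; exact sc_refl _)
    · simp only [fwdChain, chainQ, Set.mem_setOf_eq] at h₁ h₂
      rcases h₁ with rfl | rfl | rfl <;> rcases h₂ with rfl | rfl | rfl <;>
        first
          | exact sc_refl _
          | exact Or.inl (le_bot _)
          | exact Or.inr (le_bot _)
          | exact Or.inl (le_top _)
          | exact Or.inr (le_top _)

end HCproof4

section HCproof5

variable {n : ℕ} {Ed : Finset (Fin n × Fin n)}

lemma backward_dir (Γ : Fin (n + Ed.card + 1) → Set (DGState n Ed))
    (hcov : ∀ q : DGState n Ed, ∃ i, q ∈ Γ i)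
    (htr : ∀ (c : DGAlpha n Ed) (i : Fin (n + Ed.card + 1)),
      ∃ j, (fun q => DGdelta q c) '' Γ i ⊆ Γ j)
    (hch : ∀ i, ∀ q₁ ∈ Γ i, ∀ q₂ ∈ Γ i,
      StateComparable (DG n Ed) (ReachObj (DG n Ed).lang) q₁ q₂) :
    HasHamiltonianCycle n Ed := by
  classical
  choose fvc hfvc using fun a : Fin n => hcov (DGState.base (ZKind.vc a))
  choose fvg hfvg using fun v : Fin n => hcov (DGState.base (ZKind.vg v))
  choose fec hfec using fun j : Fin n => hcov (DGState.base (ZKind.ec j))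
  choose feg hfeg using fun e : {e : Fin n × Fin n // e ∈ Ed} =>
    hcov (DGState.base (ZKind.eg e.1 e.2))
  obtain ⟨iq, hiq⟩ := hcov DGState.qinit
  set F : (Fin n ⊕ {e : Fin n × Fin n // e ∈ Ed}) ⊕ Unit → Fin (n + Ed.card + 1) :=
    Sum.elim (Sum.elim fvc feg) (fun _ => iq) with hF
  have hFinj : Function.Injective F := by
    rintro ((a | e) | _) ((b | e') | _) hs
    · have hab : a = b := by
        by_contra hne
        exact incomp_vc_vc hne
          (hch _ _ (hfvc a) _ (by rw [show fvc a = fvc b from hs]; exact hfvc b))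
      rw [hab]
    · exfalso
      exact incomp_vc_eg a e'.2
        (hch _ _ (hfvc a) _ (by rw [show fvc a = feg e' from hs]; exact hfeg e'))
    · exfalso
      exact incomp_vc_qinit a
        (hch _ _ (hfvc a) _ (by rw [show fvc a = iq from hs]; exact hiq))
    · exfalso
      exact incomp_vc_eg b e.2
        (hch _ _ (by rw [show feg e = fvc b from hs]; exact hfvc b) _ (hfeg e))
    · have hee : e = e' := by
        refine Subtype.ext ?_
        by_contra hne
        exact incomp_eg_eg e.2 e'.2 hne
          (hch _ _ (hfeg e) _ (by rw [show feg e = feg e' from hs]; exact hfeg e'))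
      rw [hee]
    · exfalso
      exact incomp_eg_qinit e.2
        (hch _ _ (hfeg e) _ (by rw [show feg e = iq from hs]; exact hiq))
    · exfalso
      exact incomp_vc_qinit b
        (hch _ _ (by rw [show iq = fvc b from hs]; exact hfvc b) _ hiq)
    · exfalso
      exact incomp_eg_qinit e'.2
        (hch _ _ (by rw [show iq = feg e' from hs]; exact hfeg e') _ hiq)
    · rfl
  have hcard : Fintype.card ((Fin n ⊕ {e : Fin n × Fin n // e ∈ Ed}) ⊕ Unit) =
      Fintype.card (Fin (n + Ed.card + 1)) := by
    simp [Fintype.card_sum, Fintype.card_coe]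
  have hFsurj : Function.Surjective F :=
    ((Fintype.bijective_iff_injective_and_card F).mpr ⟨hFinj, hcard⟩).2
  -- each vg lives in a vc chain
  have hvgloc : ∀ v : Fin n, ∃ a, fvg v = fvc a := by
    intro v
    obtain ⟨s, hs⟩ := hFsurj (fvg v)
    rcases s with (a | e) | _
    · exact ⟨a, (show fvc a = fvg v from hs).symm⟩
    · exfalso
      have h1 : DGState.base (ZKind.vg v) ∈ Γ (feg e) := by
        rw [show feg e = fvg v from hs]; exact hfvg v
      exact incomp_vg_eg v e.2 (hch _ _ h1 _ (hfeg e))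
    · exfalso
      have h1 : DGState.base (ZKind.vg v) ∈ Γ iq := by
        rw [show iq = fvg v from hs]; exact hfvg v
      exact incomp_vg_qinit v (hch _ _ h1 _ hiq)
  choose g hg using hvgloc
  have hginj : Function.Injective g := by
    intro v w hvw
    by_contra hne
    have h1 : DGState.base (ZKind.vg v) ∈ Γ (fvc (g v)) := by rw [← hg v]; exact hfvg v
    have h2 : DGState.base (ZKind.vg w) ∈ Γ (fvc (g v)) := by
      rw [hvw, ← hg w]; exact hfvg w
    exact incomp_vg_vg hne (hch _ _ h1 _ h2)
  have hgbij := Finite.injective_iff_bijective.mp hginj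
  let uE := Equiv.ofBijective g hgbij
  have hubij : Function.Bijective (fun i => uE.symm i) := uE.symm.bijective
  have hgu : ∀ i, g (uE.symm i) = i := fun i => uE.apply_symm_apply i
  have hvgΓ : ∀ i, DGState.base (ZKind.vg (uE.symm i)) ∈ Γ (fvc i) := by
    intro i
    have h1 := hfvg (uE.symm i)
    rwa [hg (uE.symm i), hgu i] at h1
  have unique_vc : ∀ (a : Fin n) (i : Fin (n + Ed.card + 1)),
      DGState.base (ZKind.vc a) ∈ Γ i → i = fvc a := by
    intro a i hai
    obtain ⟨s, rfl⟩ := hFsurj i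
    rcases s with (b | e) | _
    · have hab : a = b := by
        by_contra hne
        exact incomp_vc_vc hne (hch _ _ hai _ (hfvc b))
      rw [hab]; rfl
    · exact absurd (hch _ _ hai _ (hfeg e)) (incomp_vc_eg a e.2)
    · exact absurd (hch _ _ hai _ hiq) (incomp_vc_qinit a)
  have unique_vg : ∀ (w : Fin n) (i : Fin n),
      DGState.base (ZKind.vg w) ∈ Γ (fvc i) → w = uE.symm i := by
    intro w i hw
    by_contra hne
    exact incomp_vg_vg hne (hch _ _ hw _ (hvgΓ i))
  -- each ec lives in an eg chain
  have hecloc : ∀ j : Fin n, ∃ e : {e : Fin n × Fin n // e ∈ Ed}, fec j = feg e := by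
    intro j
    obtain ⟨s, hs⟩ := hFsurj (fec j)
    rcases s with (a | e) | _
    · exfalso
      have h1 : DGState.base (ZKind.vc a) ∈ Γ (fec j) := by
        rw [← show fvc a = fec j from hs]; exact hfvc a
      exact incomp_vc_ec a j (hch _ _ h1 _ (hfec j))
    · exact ⟨e, (show feg e = fec j from hs).symm⟩
    · exfalso
      have h1 : DGState.qinit ∈ Γ (fec j) := by
        rw [← show iq = fec j from hs]; exact hiq
      exact incomp_ec_qinit j (hch _ _ (hfec j) _ h1)
  choose he hhe using hecloc
  have key : ∀ i : Fin n,
      ((he i).1.1 = uE.symm i) ∧ ((he i).1.2 = uE.symm (finSucc i)) := by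
    intro i
    have hegmem : DGState.base (ZKind.eg (he i).1 (he i).2) ∈ Γ (fec i) := by
      rw [hhe i]; exact hfeg (he i)
    have hecmem := hfec i
    constructor
    · obtain ⟨j, hj⟩ := htr DGAlpha.inL (fec i)
      have h1 : DGState.base (ZKind.vc i) ∈ Γ j := hj ⟨_, hecmem, rfl⟩
      have h2 : DGState.base (ZKind.vg (he i).1.1) ∈ Γ j := hj ⟨_, hegmem, rfl⟩
      rw [unique_vc i j h1] at h2
      exact unique_vg _ i h2
    · obtain ⟨j, hj⟩ := htr DGAlpha.outL (fec i)
      have h1 : DGState.base (ZKind.vc (finSucc i)) ∈ Γ j := hj ⟨_, hecmem, rfl⟩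
      have h2 : DGState.base (ZKind.vg (he i).1.2) ∈ Γ j := hj ⟨_, hegmem, rfl⟩
      rw [unique_vc (finSucc i) j h1] at h2
      exact unique_vg _ (finSucc i) h2
  refine ⟨fun i => uE.symm i, hubij, fun i => ?_⟩
  show (uE.symm i, uE.symm (finSucc i)) ∈ Ed
  rw [← (key i).1, ← (key i).2]
  exact (he i).2

end HCproof5

/-- `G` has a Hamiltonian cycle iff `D_G` admits a monotone
decomposition with `n + m + 1` sets. -/
theorem hamiltonianCycle_iff_monotoneDecomposition
    (n : ℕ) (hn : 1 ≤ n)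
    (Ed : Finset (Fin n × Fin n)) (hm : n ≤ Ed.card) :
    HasHamiltonianCycle n Ed ↔
      ∃ Γ : Fin (n + Ed.card + 1) → Set (DG n Ed).Q,
        MonotoneDecomposition (DG n Ed) (ReachObj (DG n Ed).lang) Γ := by
  constructor
  · rintro ⟨u, hu, hedge⟩
    exact forward_dir u hu hedge
  · rintro ⟨Γ, hdec⟩
    exact backward_dir Γ hdec.1 hdec.2.1 hdec.2.2

end RegularMemory
end
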